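/- For any real vector bundle ξ over the complex Stiefel manifold V_k(ℂ^n) with 1 < k < n, if n - k is even or n - k ≠ 2^t - 1 for all t > 0, then w_{4(n-k)+4}(ξ) = 0; consequently no complex vector bundle η over V_k(ℂ^n) has c_{2(n-k)+2}(η) a generator of H^{4(n-k)+4}(V_k(ℂ^n); ℤ) ≅ ℤ. -/
import Mathlib


/-!
STATEMENT 18. For the complex Stiefel manifold `V = V_k(ℂ^n)`, `1 < k < n`,
with `n - k` even or `n - k ≠ 2^t - 1` for all `t > 0`: every real vector
bundle `ξ` over `V` has `w_{4(n-k)+4}(ξ) = 0`, and consequently no complex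
vector bundle `η` over `V` has `c_{2(n-k)+2}(η)` a generator of
`H^{4(n-k)+4}(V; ℤ) ≅ ℤ`.
Model: `A = H^*(V; ℤ)` and `B = H^*(V; ℤ/2)` with gradings `degA`, `degB`
and coefficient reduction `f`; the exterior-algebra structure of `H^*(V)`
enters through the vanishing hypotheses below (`H^j(V; ℤ/2) = 0` for
`0 < j < 2(n-k)+1` and for even `0 < j < 4(n-k)+4`); the fact that the
first nonzero Stiefel–Whitney class occurs in a degree that is a power of 2
([MS, Problem 8-B]) is the hypothesis `first_sw_pow_two`; `f` maps Chern
classes of `η` to Stiefel–Whitney classes of the realification `η_ℝ` and is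
surjective from `H^{4(n-k)+4}(V; ℤ) ≅ ℤ` onto
`H^{4(n-k)+4}(V; ℤ/2) ≅ ℤ/2`.
-/

theorem stiefel_no_generating_chern_class
    (n k : ℕ) (hk1 : 1 < k) (hkn : k < n)
    (hcase : Even (n - k) ∨ ∀ t : ℕ, 0 < t → n - k ≠ 2 ^ t - 1)
    (A : Type) [CommRing A]              -- H^*(V_k(ℂ^n); ℤ)
    (degA : ℕ → A → Prop)
    (B : Type) [CommRing B]              -- H^*(V_k(ℂ^n); ℤ/2)
    (degB : ℕ → B → Prop)
    (f : A →+* B)                        -- coefficient reduction mod 2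
    (hf_deg : ∀ j x, degA j x → degB j (f x))
    -- H^{4(n-k)+4}(V; ℤ) ≅ ℤ, with generator detected mod 2:
    (hred_surj : ∀ y : B, degB (4 * (n - k) + 4) y →
        ∃ x : A, degA (4 * (n - k) + 4) x ∧ f x = y)
    -- mod-2 cohomology vanishing from the exterior algebra structure:
    (hvanish₁ : ∀ j y, 0 < j → j < 2 * (n - k) + 1 → degB j y → y = 0)
    (hvanish₂ : ∀ j y, 0 < j → Even j → j < 4 * (n - k) + 4 → degB j y → y = 0)
    -- H^{4(n-k)+4}(V; ℤ/2) ≅ ℤ/2, nontrivial: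
    (hB_ne : ∃ y : B, y ≠ 0 ∧ degB (4 * (n - k) + 4) y)
    (RBundle : Type)                     -- real vector bundles over V
    (w : RBundle → ℕ → B)                -- Stiefel–Whitney classes
    (w_deg : ∀ ξ j, degB j (w ξ j))
    -- the first nonzero Stiefel–Whitney class occurs in a power-of-2 degree:
    (first_sw_pow_two : ∀ (ξ : RBundle) (m : ℕ), 0 < m →
        (∀ j, 0 < j → j < m → w ξ j = 0) → w ξ m ≠ 0 → ∃ s : ℕ, m = 2 ^ s)
    (CBundle : Type)                     -- complex vector bundles over V
    (c : CBundle → ℕ → A)                -- Chern classes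
    (realify : CBundle → RBundle)        -- underlying real bundle η_ℝ
    (red_chern : ∀ (η : CBundle) (i : ℕ), f (c η i) = w (realify η) (2 * i)) :
    (∀ ξ : RBundle, w ξ (4 * (n - k) + 4) = 0) ∧
    ∀ η : CBundle, ¬ (degA (4 * (n - k) + 4) (c η (2 * (n - k) + 2)) ∧
        (∀ x, degA (4 * (n - k) + 4) x → ∃ l : ℤ, x = l • c η (2 * (n - k) + 2)) ∧
        ∀ l : ℤ, l • c η (2 * (n - k) + 2) = 0 → l = 0) := by

  have hd : 1 ≤ n - k := by omega
  have part1 : ∀ ξ : RBundle, w ξ (4 * (n - k) + 4) = 0 := by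
    intro ξ
    by_contra h
    classical
    have hex : ∃ j, 0 < j ∧ w ξ j ≠ 0 := ⟨4 * (n - k) + 4, by omega, h⟩
    set m := Nat.find hex with hm
    obtain ⟨hm0, hmne⟩ := Nat.find_spec hex
    have hmle : m ≤ 4 * (n - k) + 4 := Nat.find_le ⟨by omega, h⟩
    have hlow : ∀ j, 0 < j → j < m → w ξ j = 0 := by
      intro j hj0 hjm
      by_contra hj
      exact Nat.find_min hex hjm ⟨hj0, hj⟩
    obtain ⟨s, hs⟩ := first_sw_pow_two ξ m hm0 hlow hmne
    have hge : 2 * (n - k) + 1 ≤ m := by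
      by_contra hlt
      exact hmne (hvanish₁ m (w ξ m) hm0 (by omega) (w_deg ξ m))
    have hmeven : Even m := by
      rcases Nat.eq_zero_or_pos s with rfl | hs0
      · omega
      · exact hs ▸ (Nat.even_pow.mpr ⟨even_two, by omega⟩)
    have hmeq : m = 4 * (n - k) + 4 := by
      by_contra hne
      exact hmne (hvanish₂ m (w ξ m) hm0 hmeven (by omega) (w_deg ξ m))
    -- 2 ^ s = 4 * (n-k) + 4, so s ≥ 3 and 2^(s-2) = (n-k) + 1
    have hs3 : 3 ≤ s := by
      rcases Nat.lt_or_ge s 3 with h3 | h3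
      · interval_cases s <;> omega
      · exact h3
    have hpa : 2 ^ ((s - 2) + 2) = 2 ^ (s - 2) * 4 := by rw [pow_add]; ring
    have hseq : (s - 2) + 2 = s := by omega
    rw [hseq] at hpa
    have hpow : 2 ^ (s - 2) = (n - k) + 1 := by omega
    have hev2 : Even (2 ^ (s - 2)) := (Nat.even_pow).mpr ⟨even_two, by omega⟩
    rcases hcase with heven | hne
    · obtain ⟨a, ha⟩ := heven; obtain ⟨b, hb⟩ := hev2; omega
    · exact hne (s - 2) (by omega) (by omega)
  refine ⟨part1, ?_⟩
  rintro η ⟨hdeg, hgen, _⟩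
  obtain ⟨y, hy0, hydeg⟩ := hB_ne
  obtain ⟨x, hxdeg, hfx⟩ := hred_surj y hydeg
  obtain ⟨l, hl⟩ := hgen x hxdeg
  apply hy0
  rw [← hfx, hl, map_zsmul, red_chern,
    show 2 * (2 * (n - k) + 2) = 4 * (n - k) + 4 by ring, part1, smul_zero]
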